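/- Let d ≥ 1, i > 0, and 0 ≤ j ≤ d−i. Then for every k with 0 ≤ k ≤ d+1, the coefficient of x^k in C_{d,i,j}(x) equals the coefficient of x^{d+1−k} in C_{d,i,d−i−j}(x). -/

import Mathlib

open Finset Polynomial
open scoped BigOperators

/-- The cyclic successor of `a` on `{1, …, d}`: `d ⊕ 1 = 1`. -/
def cyc (d a : ℕ) : ℕ := if a = d then 1 else a + 1

/-- The cyclic interval `[k, l]` of `{1, …, d}`; it is wrapped when `k > l`. -/
def cyclicInterval (d k l : ℕ) : Finset ℕ :=
  if k ≤ l then Finset.Icc k l else Finset.Icc k d ∪ Finset.Icc 1 l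

/-- `P` is a set partition of `{1, …, d}`, given as its finite set of blocks. -/
def IsPartitionOf (d : ℕ) (P : Finset (Finset ℕ)) : Prop :=
  (∀ B ∈ P, B ⊆ Finset.Icc 1 d ∧ B.Nonempty) ∧
    ∀ x ∈ Finset.Icc 1 d, ∃! B, B ∈ P ∧ x ∈ B

/-- `P` is noncrossing: there are no `a < b < c < e` with `a, c` in one block and
`b, e` in a different block. -/
def Noncrossing (P : Finset (Finset ℕ)) : Prop :=
  ∀ B₁ ∈ P, ∀ B₂ ∈ P, ∀ a b c e : ℕ,
    a < b → b < c → c < e → a ∈ B₁ → c ∈ B₁ → b ∈ B₂ → e ∈ B₂ → B₁ = B₂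

/-- `P` is a noncrossing set partition of `{1, …, d}`. -/
def IsNC (d : ℕ) (P : Finset (Finset ℕ)) : Prop :=
  IsPartitionOf d P ∧ Noncrossing P

open scoped Classical in
/-- The finite set `NC(d)` of noncrossing partitions of `{1, …, d}`. -/
noncomputable def NCd (d : ℕ) : Finset (Finset (Finset ℕ)) :=
  ((Finset.Icc 1 d).powerset.powerset).filter fun P => IsNC d P

/-- `block(π)`: the number of nonsingleton blocks. -/
def blockCount (P : Finset (Finset ℕ)) : ℕ :=
  (P.filter fun B => 2 ≤ B.card).card

/-- The number of singleton blocks of `P` contained in `U`. -/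
def singIn (P : Finset (Finset ℕ)) (U : Finset ℕ) : ℕ :=
  (P.filter fun B => B.card = 1 ∧ B ⊆ U).card

open scoped Classical in
/-- The number of `a ∈ A` that are antisingletons of `P`, i.e. such that `a` and its cyclic
successor lie in the same block of `P`.  Here `A` is the set of starting points of the
internal adjacencies of a family of cyclic intervals. -/
noncomputable def antiIn (d : ℕ) (P : Finset (Finset ℕ)) (A : Finset ℕ) : ℕ :=
  (A.filter fun a => ∃ B ∈ P, a ∈ B ∧ cyc d a ∈ B).card

/-- The weight `wt_S(π) = x^(block(π) + sing_S(π) + anti_S(π))`, where the family `S`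
is recorded by the union `U` of its intervals and the set `A` of starting points of its
internal adjacencies. -/
noncomputable def wt (d : ℕ) (P : Finset (Finset ℕ)) (U A : Finset ℕ) : Polynomial ℚ :=
  X ^ (blockCount P + singIn P U + antiIn d P A)

/-- Four elements of `ZMod n` occur in this cyclic order. -/
def cyclicOrdered (n : ℕ) (a b c e : ZMod n) : Prop :=
  ∃ r : ZMod n, (a - r).val < (b - r).val ∧ (b - r).val < (c - r).val ∧ (c - r).val < (e - r).val

/-- Two blocks on the cycle `ZMod n` cross. -/
def crosses (n : ℕ) (A B : Finset (ZMod n)) : Prop :=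
  ∃ a ∈ A, ∃ c ∈ A, ∃ b ∈ B, ∃ e ∈ B, cyclicOrdered n a b c e

/-- The embedding of `[d]` into the `2d`-cycle: `i ↦ 2i - 1`. -/
def embOrig (d i : ℕ) : ZMod (2 * d) := ((2 * i - 1 : ℕ) : ZMod (2 * d))

/-- The embedding of the copy `[d]'` into the `2d`-cycle: `i' ↦ 2(d - i) mod 2d`. -/
def embCopy (d i : ℕ) : ZMod (2 * d) := ((2 * (d - i) : ℕ) : ZMod (2 * d))

/-- The blocks of `P` (embedded via `embOrig`) together with the blocks of `Q`
(embedded via `embCopy`) form a noncrossing partition of the `2d`-cycle. -/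
def SUCompat (d : ℕ) (P Q : Finset (Finset ℕ)) : Prop :=
  (∀ B₁ ∈ P, ∀ B₂ ∈ P, B₁ ≠ B₂ →
      ¬ crosses (2 * d) (B₁.image (embOrig d)) (B₂.image (embOrig d))) ∧
  (∀ B₁ ∈ Q, ∀ B₂ ∈ Q, B₁ ≠ B₂ →
      ¬ crosses (2 * d) (B₁.image (embCopy d)) (B₂.image (embCopy d))) ∧
  ∀ B₁ ∈ P, ∀ B₂ ∈ Q, ¬ crosses (2 * d) (B₁.image (embOrig d)) (B₂.image (embCopy d))

/-- `P` refines into `Q`: every block of `P` is contained in a block of `Q`. -/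
def refines (P Q : Finset (Finset ℕ)) : Prop :=
  ∀ B ∈ P, ∃ B' ∈ Q, B ⊆ B'

/-- `Q` is the Simion–Ullman complement `α(P)`: it is a partition of `{1, …, d}`
(the copy `[d]'` being identified with `[d]`), the blocks of `P` and `Q` together form a
noncrossing partition of the `2d`-cycle, and `Q` is the coarsest such partition. -/
def IsSUComplement (d : ℕ) (P Q : Finset (Finset ℕ)) : Prop :=
  IsPartitionOf d Q ∧ SUCompat d P Q ∧
    ∀ R, IsPartitionOf d R → SUCompat d P R → refines R Q

/-- The toric `g`-polynomial of the `j`-dimensional cube: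
`g_j(x) = Σ_{m=0}^{⌊j/2⌋} Catalan(j-m)·binom(j-m, m)·(x-1)^m`. -/
noncomputable def gPoly (j : ℕ) : Polynomial ℚ :=
  ∑ m ∈ Finset.range (j / 2 + 1),
    (C ((catalan (j - m) * (j - m).choose m : ℕ) : ℚ)) * (X - 1) ^ m

/-- The polynomial `Q_{d,k}(x)`, `0 ≤ k ≤ d+1`. -/
noncomputable def Qpoly (d k : ℕ) : Polynomial ℚ :=
  if k = 0 then
    (X - 1) ^ (d + 1) +
      ∑ j ∈ Finset.range (d + 1),
        (C ((2 ^ (d - j) * d.choose j : ℕ) : ℚ)) * (X - 1) ^ (d - j) * gPoly j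
  else if k ≤ d then
    ∑ j ∈ Finset.Icc (k - 1) d,
      (C ((2 ^ (d - j) * ((d - k).choose (d - j) + (d + 1 - k).choose (d - j)) : ℕ) : ℚ)) *
        (X - 1) ^ (d - j) * gPoly j
  else gPoly d

/-- The polynomial `C_{d,i,j}(x) = Σ_{k=j+1}^{i+j} (1/2)^i binom(i-1, k-1-j) Q_{d,k}(x)`. -/
noncomputable def Cpoly (d i j : ℕ) : Polynomial ℚ :=
  ∑ k ∈ Finset.Icc (j + 1) (i + j),
    (C ((1 / 2 : ℚ) ^ i * ((i - 1).choose (k - 1 - j) : ℚ))) * Qpoly d k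

/-- `wt_k(π)`: for `1 ≤ k ≤ d` the weight w.r.t. `S = {[k,d]}`; for `k = 0` the weight
w.r.t. the full circle `[1,d]^*`; for `k = d+1` the weight w.r.t. `S = ∅`. -/
noncomputable def wtk (d k : ℕ) (P : Finset (Finset ℕ)) : Polynomial ℚ :=
  if k = 0 then wt d P (Finset.Icc 1 d) (Finset.Icc 1 d)
  else if k ≤ d then wt d P (Finset.Icc k d) (Finset.Icc k d \ {d})
  else wt d P ∅ ∅

/-- The `t`-th left endpoint of a family of cyclic intervals given as a list of pairs. -/
def nthK (L : List (ℕ × ℕ)) (t : ℕ) : ℕ := (L.getD t (0, 0)).1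

/-- The `t`-th right endpoint of a family of cyclic intervals given as a list of pairs. -/
def nthL (L : List (ℕ × ℕ)) (t : ℕ) : ℕ := (L.getD t (0, 0)).2

/-- The list `[(k₁,l₁),…,(k_i,l_i)]` is a family of pairwise disjoint cyclic intervals of
`[d]` in standard form: `1 ≤ k₁ ≤ l₁ < k₂ ≤ l₂ < … < k_i ≤ d`, and either
`k_i ≤ l_i ≤ d` or `1 ≤ l_i < k₁` (only the last interval may be wrapped). -/
def StandardForm (d : ℕ) (L : List (ℕ × ℕ)) : Prop :=
  L ≠ [] ∧ 1 ≤ nthK L 0 ∧ nthK L (L.length - 1) ≤ d ∧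
  (∀ t, t + 1 < L.length → nthK L t ≤ nthL L t ∧ nthL L t < nthK L (t + 1)) ∧
  ((nthK L (L.length - 1) ≤ nthL L (L.length - 1) ∧ nthL L (L.length - 1) ≤ d) ∨
    (1 ≤ nthL L (L.length - 1) ∧ nthL L (L.length - 1) < nthK L 0))

/-- The dual family `S'` of a standard-form family
`S = [(k₁,l₁),…,(k_i,l_i)]`, namely
`S' = [(d-k_i+1, d-l_{i-1}), …, (d-k₂+1, d-l₁), (d-k₁+1, d-l_i)]`,
where endpoints are taken in `{1, …, d}` cyclically (so `d - l` means `d` when `l = d`). -/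
def dualFam (d : ℕ) (L : List (ℕ × ℕ)) : List (ℕ × ℕ) :=
  (List.range L.length).map fun t =>
    (d - nthK L (L.length - 1 - t) + 1,
     d - (nthL L ((2 * L.length - 2 - t) % L.length)) % d)

/-- A (generalized) family of cyclic intervals of `[d]`: the empty family `∅`, the full
circle `[1,d]^*`, or a finite list of cyclic intervals. -/
inductive Fam where
  | empty : Fam
  | full : Fam
  | fam (L : List (ℕ × ℕ)) : Fam

/-- The union of the intervals of a generalized family. -/
def famU (d : ℕ) : Fam → Finset ℕ
  | Fam.empty => ∅
  | Fam.full => Finset.Icc 1 d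
  | Fam.fam L => L.foldr (fun p acc => cyclicInterval d p.1 p.2 ∪ acc) ∅

/-- The set of starting points of internal adjacencies of a generalized family. -/
def famAdj (d : ℕ) : Fam → Finset ℕ
  | Fam.empty => ∅
  | Fam.full => Finset.Icc 1 d
  | Fam.fam L => L.foldr (fun p acc => (cyclicInterval d p.1 p.2 \ {p.2}) ∪ acc) ∅

/-- The dual `S'` of a generalized family `S`, with `∅' = [1,d]^*` and `([1,d]^*)' = ∅`. -/
def famDual (d : ℕ) : Fam → Fam
  | Fam.empty => Fam.full
  | Fam.full => Fam.empty
  | Fam.fam L => Fam.fam (dualFam d L)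

/-- The generalized family is in standard form (`∅` and `[1,d]^*` always are). -/
def FamStd (d : ℕ) : Fam → Prop
  | Fam.empty => True
  | Fam.full => True
  | Fam.fam L => StandardForm d L

/-- `binom(n, r)` for an integer lower entry `r`, which is `0` whenever `r < 0`. -/
def chooseZ (n : ℕ) (r : ℤ) : ℕ := if 0 ≤ r then n.choose r.toNat else 0



namespace St11

abbrev R := Polynomial ℚ
abbrev S := PowerSeries R

noncomputable def yy : R := Polynomial.X - 1
noncomputable def sy : S := PowerSeries.C yy
noncomputable def sx : S := PowerSeries.C Polynomial.X
noncomputable def su : S := PowerSeries.X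
noncomputable def sA : S := 1 + sy * su
noncomputable def sB : S := 1 + 2 * sy * su
noncomputable def sAh : S := 1 - sy * su
noncomputable def sBh : S := 1 - 2 * sy * su
noncomputable def sBinv : S := PowerSeries.mk fun n => (-(2 * yy)) ^ n
noncomputable def catQ (n : ℕ) : R := (catalan n : R)

lemma two_sy : 2 * sy = PowerSeries.C (2 * yy) := by
  rw [map_mul, map_ofNat, sy]

lemma hx : sx = 1 + sy := by
  rw [sx, sy, yy, ← map_one (PowerSeries.C (R := R)), ← map_add]
  congr 1; ring

lemma B_mul_Binv : sB * sBinv = 1 := by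
  have h2 : sB * sBinv = sBinv + PowerSeries.C (2*yy) * (PowerSeries.X * sBinv) := by
    rw [sB, two_sy, su]; ring
  apply PowerSeries.ext; intro n
  rw [h2]
  cases n with
  | zero => simp [sBinv]
  | succ k =>
    rw [map_add, PowerSeries.coeff_C_mul, PowerSeries.coeff_succ_X_mul, sBinv,
      PowerSeries.coeff_mk, PowerSeries.coeff_mk, PowerSeries.coeff_one]
    simp only [Nat.succ_ne_zero, if_false]
    ring

lemma coeff_onePlus (c : R) (j e : ℕ) :
    PowerSeries.coeff e ((1 + PowerSeries.C c * PowerSeries.X) ^ j) = (j.choose e : R) * c ^ e := by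
  rw [add_comm, add_pow]
  rw [map_sum]
  have : ∀ k ∈ Finset.range (j+1),
      PowerSeries.coeff e ((PowerSeries.C c * PowerSeries.X) ^ k * 1 ^ (j - k) * (j.choose k : S))
        = if e = k then (j.choose k : R) * c ^ e else 0 := by
    intro k _
    rw [one_pow, mul_one, mul_pow, ← map_pow,
      ← map_natCast (PowerSeries.C (R := R)) (j.choose k), mul_right_comm, ← map_mul,
      PowerSeries.coeff_C_mul, PowerSeries.coeff_X_pow]
    by_cases h : e = k
    · subst h; simp [mul_comm]
    · simp [h]
  rw [Finset.sum_congr rfl this, Finset.sum_ite_eq (Finset.range (j+1)) e]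
  by_cases he : e ∈ Finset.range (j+1)
  · simp [he]
  · rw [if_neg he]
    have : j < e := by simpa using Nat.lt_of_succ_le (not_lt.mp (by simpa [Finset.mem_range] using he))
    rw [Nat.choose_eq_zero_of_lt this]
    simp


lemma sA_eq : sA = 1 + PowerSeries.C yy * PowerSeries.X := rfl
lemma sB_eq : sB = 1 + PowerSeries.C (2*yy) * PowerSeries.X := by
  rw [sB, map_mul, map_ofNat, sy, su]
lemma sAh_eq : sAh = 1 + PowerSeries.C (-yy) * PowerSeries.X := by
  rw [sAh, map_neg, sy, su]; ring
lemma sBh_eq : sBh = 1 + PowerSeries.C (-(2*yy)) * PowerSeries.X := by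
  rw [sBh, map_neg, map_mul, map_ofNat, sy, su]; ring

lemma coeff_sA_pow (j e : ℕ) : PowerSeries.coeff e (sA ^ j) = (j.choose e : R) * yy ^ e := by
  rw [sA_eq, coeff_onePlus]
lemma coeff_sB_pow (j e : ℕ) : PowerSeries.coeff e (sB ^ j) = (j.choose e : R) * (2*yy) ^ e := by
  rw [sB_eq, coeff_onePlus]
lemma coeff_sAh_pow (j e : ℕ) : PowerSeries.coeff e (sAh ^ j) = (j.choose e : R) * (-yy) ^ e := by
  rw [sAh_eq, coeff_onePlus]
lemma coeff_sBh_pow (j e : ℕ) : PowerSeries.coeff e (sBh ^ j) = (j.choose e : R) * (-(2*yy)) ^ e := by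
  rw [sBh_eq, coeff_onePlus]

/-- integer powers of B -/
noncomputable def Bz (N : ℤ) : S := if 0 ≤ N then sB ^ N.toNat else sBinv ^ (-N).toNat

lemma Bz_succ (N : ℤ) : Bz (N + 1) = sB * Bz N := by
  rcases le_or_gt 0 N with h | h
  · rw [Bz, Bz, if_pos h, if_pos (by omega)]
    have : (N+1).toNat = N.toNat + 1 := by omega
    rw [this, pow_succ, mul_comm]
  · rcases eq_or_lt_of_le (by omega : N + 1 ≤ 0) with h1 | h1
    · rw [Bz, Bz, if_pos (le_of_eq h1.symm), if_neg (by omega)]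
      have h2 : (-N).toNat = 1 := by omega
      have h3 : (N+1).toNat = 0 := by omega
      rw [h2, h3, pow_one, pow_zero, B_mul_Binv]
    · rw [Bz, Bz, if_neg (by omega), if_neg (by omega)]
      have h2 : (-N).toNat = (-(N+1)).toNat + 1 := by omega
      rw [h2, pow_succ', ← mul_assoc, B_mul_Binv, one_mul]

lemma Bz_pred (N : ℤ) : Bz (N - 1) = Bz N - 2 * sy * su * Bz (N - 1) := by
  have := Bz_succ (N - 1)
  simp only [sub_add_cancel] at this
  rw [this, sB]; ring

lemma Bzpow (p q : ℕ) : sB ^ p * sBinv ^ q = Bz ((p : ℤ) - q) := by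
  induction q with
  | zero => simp [Bz]
  | succ k ih =>
    have h2 := Bz_succ ((p:ℤ) - (k+1))
    have h3 : (p:ℤ) - (k+1) + 1 = (p:ℤ) - k := by ring
    rw [h3] at h2
    have h4 : sB ^ p * sBinv ^ (k+1) = (sB ^ p * sBinv ^ k) * sBinv := by ring
    rw [h4, ih, h2, mul_assoc, mul_comm (Bz _) sBinv, ← mul_assoc, B_mul_Binv, one_mul]
    congr 1

lemma constCoeff_Bz (N : ℤ) : PowerSeries.constantCoeff (Bz N) = 1 := by
  rw [Bz]
  split
  · rw [map_pow]
    have : PowerSeries.constantCoeff sB = 1 := by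
      rw [sB_eq]; simp
    rw [this, one_pow]
  · rw [map_pow]
    have : PowerSeries.constantCoeff sBinv = 1 := by
      rw [sBinv]; simp [PowerSeries.coeff_zero_eq_constantCoeff.symm]
    rw [this, one_pow]

/-- The series `∑ n, c n * W ^ n` for `W` with zero constant term. -/
noncomputable def Zser (W : S) (c : ℕ → R) : S :=
  PowerSeries.mk fun d => ∑ n ∈ Finset.range (d+1), c n * PowerSeries.coeff d (W ^ n)

lemma coeff_W_pow_eq_zero {W : S} (hW : PowerSeries.constantCoeff W = 0)
    {n d : ℕ} (h : d < n) : PowerSeries.coeff d (W ^ n) = 0 := by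
  have h1 : PowerSeries.X ∣ W := PowerSeries.X_dvd_iff.mpr hW
  have h2 : (PowerSeries.X : S) ^ n ∣ W ^ n := pow_dvd_pow_of_dvd h1 n
  exact (PowerSeries.X_pow_dvd_iff.mp h2) d h

lemma coeff_M_W_pow_eq_zero {W : S} (hW : PowerSeries.constantCoeff W = 0)
    (M : S) {n d : ℕ} (h : d < n) : PowerSeries.coeff d (M * W ^ n) = 0 := by
  rw [PowerSeries.coeff_mul]
  apply Finset.sum_eq_zero
  intro p hp
  rw [Finset.HasAntidiagonal.mem_antidiagonal] at hp
  rw [coeff_W_pow_eq_zero hW (by omega), mul_zero]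

lemma coeff_mul_Zser {W : S} (hW : PowerSeries.constantCoeff W = 0) (M : S) (c : ℕ → R) (d : ℕ) :
    PowerSeries.coeff d (M * Zser W c)
      = ∑ n ∈ Finset.range (d+1), c n * PowerSeries.coeff d (M * W ^ n) := by
  rw [PowerSeries.coeff_mul]
  have h1 : ∀ p ∈ Finset.HasAntidiagonal.antidiagonal d,
      PowerSeries.coeff p.1 M * PowerSeries.coeff p.2 (Zser W c)
        = ∑ n ∈ Finset.range (d+1), c n *
            (PowerSeries.coeff p.1 M * PowerSeries.coeff p.2 (W ^ n)) := by
    intro p hp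
    rw [Finset.HasAntidiagonal.mem_antidiagonal] at hp
    rw [Zser, PowerSeries.coeff_mk]
    rw [Finset.mul_sum]
    rw [← Finset.sum_subset (Finset.range_subset_range.mpr (by omega : p.2 + 1 ≤ d + 1))]
    · apply Finset.sum_congr rfl; intro n _; ring
    · intro n _ hn
      rw [Finset.mem_range, not_lt] at hn
      rw [coeff_W_pow_eq_zero hW (by omega), mul_zero, mul_zero]
  rw [Finset.sum_congr rfl h1, Finset.sum_comm]
  apply Finset.sum_congr rfl
  intro n _
  rw [PowerSeries.coeff_mul, Finset.mul_sum]

lemma coeff_Zser (W : S) (c : ℕ → R) (d : ℕ) :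
    PowerSeries.coeff d (Zser W c)
      = ∑ n ∈ Finset.range (d+1), c n * PowerSeries.coeff d (W ^ n) := by
  rw [Zser, PowerSeries.coeff_mk]


lemma sum_triangle (N : ℕ) (F : ℕ → ℕ → R) :
    ∑ n ∈ Finset.range N, ∑ p ∈ Finset.HasAntidiagonal.antidiagonal n, F p.1 p.2
      = ∑ i ∈ Finset.range N, ∑ j ∈ Finset.range (N - i), F i j := by
  induction N with
  | zero => simp
  | succ N ih =>
    rw [Finset.sum_range_succ, ih, Finset.Nat.sum_antidiagonal_eq_sum_range_succ_mk,
      Finset.sum_range_succ (fun i => ∑ j ∈ Finset.range (N+1-i), F i j) N]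
    have h1 : ∀ i ∈ Finset.range N,
        ∑ j ∈ Finset.range (N+1-i), F i j = ∑ j ∈ Finset.range (N-i), F i j + F i (N-i) := by
      intro i hi
      rw [show N+1-i = (N-i)+1 from by rw [Finset.mem_range] at hi; omega, Finset.sum_range_succ]
    rw [Finset.sum_congr rfl h1, Finset.sum_add_distrib, show N+1-N = 1 from by omega,
      Finset.sum_range_one, Finset.sum_range_succ (fun k => F k (N-k)) N, Nat.sub_self]
    ring

lemma Zser_mul_Zser {W : S} (hW : PowerSeries.constantCoeff W = 0) (c c' : ℕ → R) :
    Zser W c * Zser W c' = Zser W (fun n => ∑ i ∈ Finset.range (n+1), c i * c' (n - i)) := by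
  apply PowerSeries.ext; intro d
  rw [coeff_mul_Zser hW (Zser W c) c' d, coeff_Zser]
  have h1 : ∀ m ∈ Finset.range (d+1), c' m * PowerSeries.coeff d (Zser W c * W ^ m)
      = ∑ n ∈ Finset.range (d+1), c n * c' m * PowerSeries.coeff d (W ^ (n + m)) := by
    intro m _
    rw [mul_comm (Zser W c) (W^m), coeff_mul_Zser hW (W^m) c d, Finset.mul_sum]
    apply Finset.sum_congr rfl; intro n _
    rw [← pow_add, add_comm m n]; ring
  rw [Finset.sum_congr rfl h1]
  have h2 : ∀ n ∈ Finset.range (d+1),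
      (∑ i ∈ Finset.range (n+1), c i * c' (n-i)) * PowerSeries.coeff d (W^n)
      = ∑ p ∈ Finset.HasAntidiagonal.antidiagonal n, c p.1 * c' p.2 * PowerSeries.coeff d (W^(p.1+p.2)) := by
    intro n _
    rw [Finset.sum_mul, Finset.Nat.sum_antidiagonal_eq_sum_range_succ_mk]
    apply Finset.sum_congr rfl
    intro i hi
    rw [Finset.mem_range] at hi
    rw [show i + (n - i) = n from by omega]
  rw [Finset.sum_congr rfl h2, sum_triangle (d+1) (fun i j => c i * c' j * PowerSeries.coeff d (W^(i+j)))]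
  rw [Finset.sum_comm]
  apply Finset.sum_congr rfl
  intro n hn
  rw [Finset.mem_range] at hn
  rw [← Finset.sum_subset (Finset.range_subset_range.mpr (by omega : d + 1 - n ≤ d + 1))]
  intro m _ hm
  rw [Finset.mem_range] at hm
  rw [coeff_W_pow_eq_zero hW (by omega), mul_zero]

noncomputable def sZ : S := sx * su * sA * sBinv ^ 2
noncomputable def sG : S := Zser (su * sA) catQ
noncomputable def sH : S := Zser sZ catQ

lemma catQ_succ (n : ℕ) : ∑ i ∈ Finset.range (n+1), catQ i * catQ (n - i) = catQ (n+1) := by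
  rw [catQ, catalan_succ]
  rw [← Finset.sum_range (fun i => catalan i * catalan (n - i))]
  push_cast [catQ]
  rfl

lemma hWG : PowerSeries.constantCoeff (su * sA) = 0 := by
  rw [map_mul, su, PowerSeries.constantCoeff_X, zero_mul]

lemma hWZ : PowerSeries.constantCoeff sZ = 0 := by
  rw [sZ, map_mul, map_mul, map_mul, su, PowerSeries.constantCoeff_X]
  ring

lemma FE_G : sG = 1 + su * sA * sG ^ 2 := by
  apply PowerSeries.ext; intro d
  rw [sG, map_add, sq (Zser (su*sA) catQ), Zser_mul_Zser hWG, coeff_mul_Zser hWG, coeff_Zser]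
  rw [Finset.sum_range_succ' (fun n => catQ n * PowerSeries.coeff d ((su*sA) ^ n)) d]
  rw [Finset.sum_range_succ (fun n => (∑ i ∈ Finset.range (n+1), catQ i * catQ (n-i)) *
        PowerSeries.coeff d (su * sA * (su*sA) ^ n)) d]
  have hlast : PowerSeries.coeff d (su * sA * (su * sA) ^ d) = 0 := by
    rw [← pow_succ']
    exact coeff_W_pow_eq_zero hWG (by omega)
  rw [hlast, mul_zero, add_zero, pow_zero]
  have h0 : catQ 0 * PowerSeries.coeff d 1 = PowerSeries.coeff d 1 := by
    rw [catQ]; norm_num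
  rw [h0, add_comm]
  congr 1
  apply Finset.sum_congr rfl
  intro i _
  rw [catQ_succ, ← pow_succ']

lemma BBZ (n : ℕ) : sB ^ 2 * sZ ^ (n+1) = sx * su * sA * sZ ^ n := by
  have h : sB ^ 2 * sZ = sx * su * sA := by
    rw [sZ]
    linear_combination (sx*su*sA*(sB*sBinv+1)) * B_mul_Binv
  calc sB ^ 2 * sZ ^ (n+1) = (sB ^ 2 * sZ) * sZ ^ n := by ring
  _ = sx * su * sA * sZ ^ n := by rw [h]

lemma FE_H : sB ^ 2 * sH = sB ^ 2 + sx * su * sA * sH ^ 2 := by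
  apply PowerSeries.ext; intro d
  rw [sH, map_add, sq (Zser sZ catQ), Zser_mul_Zser hWZ, coeff_mul_Zser hWZ, coeff_mul_Zser hWZ]
  rw [Finset.sum_range_succ' (fun n => catQ n * PowerSeries.coeff d (sB ^ 2 * sZ ^ n)) d]
  rw [Finset.sum_range_succ (fun n => (∑ i ∈ Finset.range (n+1), catQ i * catQ (n-i)) *
        PowerSeries.coeff d (sx * su * sA * sZ ^ n)) d]
  have hlast : PowerSeries.coeff d (sx * su * sA * sZ ^ d) = 0 := by
    rw [← BBZ]
    exact coeff_M_W_pow_eq_zero hWZ (sB^2) (by omega)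
  rw [hlast, mul_zero, add_zero, pow_zero, mul_one]
  have h0 : catQ 0 * PowerSeries.coeff d (sB ^ 2) = PowerSeries.coeff d (sB ^ 2) := by
    rw [catQ]; norm_num
  rw [h0, add_comm]
  rw [add_right_inj]
  apply Finset.sum_congr rfl
  intro i _
  rw [catQ_succ, ← BBZ]

lemma uniqE (P P' : S) (h : sB ^ 2 * P = sx * sA * sB ^ 2 + su * P ^ 2)
    (h' : sB ^ 2 * P' = sx * sA * sB ^ 2 + su * P' ^ 2) : P = P' := by
  have hd : sB ^ 2 * (P - P') = su * ((P + P') * (P - P')) := by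
    linear_combination h - h'
  apply PowerSeries.ext
  intro n
  induction n using Nat.strong_induction_on with
  | _ n IH =>
    have hz : ∀ m < n, PowerSeries.coeff m (P - P') = 0 := by
      intro m hm
      rw [map_sub, IH m hm, sub_self]
    have hB2 : PowerSeries.coeff 0 (sB ^ 2) = 1 := by
      rw [PowerSeries.coeff_zero_eq_constantCoeff, map_pow]
      have : PowerSeries.constantCoeff sB = 1 := by simp [sB, su]
      rw [this, one_pow]
    have hL : PowerSeries.coeff n (sB ^ 2 * (P - P')) = PowerSeries.coeff n (P - P') := by
      rw [PowerSeries.coeff_mul]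
      rw [Finset.sum_eq_single (0, n)]
      · rw [hB2, one_mul]
      · intro p hp hne
        rw [Finset.HasAntidiagonal.mem_antidiagonal] at hp
        rcases Nat.eq_zero_or_pos p.1 with h1 | h1
        · exfalso; apply hne; have : p.2 = n := by omega
          cases p; simp_all
        · rw [hz p.2 (by omega), mul_zero]
      · intro hni
        exact absurd (by simp : ((0:ℕ), n) ∈ Finset.HasAntidiagonal.antidiagonal n) hni
    have hR : PowerSeries.coeff n (su * ((P + P') * (P - P'))) = 0 := by
      rw [su]
      cases n with
      | zero =>
        rw [PowerSeries.coeff_zero_eq_constantCoeff, map_mul, PowerSeries.constantCoeff_X,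
          zero_mul]
      | succ k =>
        rw [PowerSeries.coeff_succ_X_mul, PowerSeries.coeff_mul]
        apply Finset.sum_eq_zero
        intro p hp
        rw [Finset.HasAntidiagonal.mem_antidiagonal] at hp
        rw [hz p.2 (by omega), mul_zero]
    have hfin : PowerSeries.coeff n (P - P') = 0 := by rw [← hL, hd, hR]
    rw [map_sub] at hfin
    exact sub_eq_zero.mp hfin

lemma eqP : sB ^ 2 * (sx * sA * sH) = sx * sA * sB ^ 2 + su * (sx * sA * sH) ^ 2 := by
  linear_combination (sx * sA) * FE_H

lemma eqP' : sB ^ 2 * (sB * (sA * sG + sy)) = sx * sA * sB ^ 2 + su * (sB * (sA * sG + sy)) ^ 2 := by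
  have h := FE_G
  rw [hx]
  simp only [sA, sB] at h ⊢
  linear_combination ((1+2*sy*su)^2*(1+sy*su)) * h

lemma KEY : sx * sA * sH = sB * (sA * sG + sy) := uniqE _ _ eqP eqP'


lemma ccAh : PowerSeries.constantCoeff sAh = 1 := by simp [sAh, su]
lemma ccBh : PowerSeries.constantCoeff sBh = 1 := by simp [sBh, su]
lemma ccA : PowerSeries.constantCoeff sA = 1 := by simp [sA, su]

lemma coeff_succ_onePlus (c : R) (F : S) (k : ℕ) :
    PowerSeries.coeff (k+1) ((1 + PowerSeries.C c * PowerSeries.X) * F)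
      = PowerSeries.coeff (k+1) F + c * PowerSeries.coeff k F := by
  rw [add_mul, one_mul, map_add, mul_assoc, PowerSeries.coeff_C_mul,
    PowerSeries.coeff_succ_X_mul]

lemma coeff_succ_sAh (F : S) (k : ℕ) :
    PowerSeries.coeff (k+1) (sAh * F)
      = PowerSeries.coeff (k+1) F + (-yy) * PowerSeries.coeff k F := by
  rw [sAh_eq]; exact coeff_succ_onePlus _ _ _

lemma coeff_succ_sBh (F : S) (k : ℕ) :
    PowerSeries.coeff (k+1) (sBh * F)
      = PowerSeries.coeff (k+1) F + (-(2*yy)) * PowerSeries.coeff k F := by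
  rw [sBh_eq]; exact coeff_succ_onePlus _ _ _

lemma coeff_succ_sA (F : S) (k : ℕ) :
    PowerSeries.coeff (k+1) (sA * F)
      = PowerSeries.coeff (k+1) F + yy * PowerSeries.coeff k F := by
  rw [sA_eq]; exact coeff_succ_onePlus _ _ _

lemma coeff_succ_Bz (j : ℕ) (N : ℤ) (k : ℕ) :
    PowerSeries.coeff (k+1) (sA ^ j * Bz N)
      = PowerSeries.coeff (k+1) (sA ^ j * Bz (N+1))
        - 2 * yy * PowerSeries.coeff k (sA ^ j * Bz N) := by
  have h := Bz_pred (N+1)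
  rw [show N + 1 - 1 = N from by ring] at h
  rw [two_sy, su] at h
  have h2 : sA ^ j * Bz N = sA ^ j * Bz (N+1)
      - PowerSeries.C (2*yy) * (PowerSeries.X * (sA ^ j * Bz N)) := by
    linear_combination (sA ^ j) * h
  rw [h2, map_sub, PowerSeries.coeff_C_mul, PowerSeries.coeff_succ_X_mul, ← h2]

lemma BID : ∀ (s j e : ℕ),
    PowerSeries.coeff e (sAh ^ j * sBh ^ s)
      = PowerSeries.coeff e (sA ^ j * Bz ((e:ℤ) - s - j - 1)) := by
  have hzero : ∀ (j s : ℕ) (N : ℤ),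
      PowerSeries.coeff 0 (sAh ^ j * sBh ^ s) = PowerSeries.coeff 0 (sA ^ j * Bz N) := by
    intro j s N
    simp only [PowerSeries.coeff_zero_eq_constantCoeff, map_mul, map_pow, ccAh, ccA, ccBh,
      constCoeff_Bz, one_pow, mul_one, one_mul]
  intro s
  induction s with
  | zero =>
    intro j
    induction j with
    | zero =>
      intro e
      cases e with
      | zero => exact hzero 0 0 _
      | succ k =>
        simp only [pow_zero, mul_one, one_mul, Nat.cast_add, Nat.cast_one, Nat.cast_zero]
        rw [show (k:ℤ) + 1 - 0 - 0 - 1 = (k:ℤ) from by ring]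
        rw [show Bz (k:ℤ) = sB ^ k from by rw [Bz, if_pos (by positivity), Int.toNat_natCast]]
        rw [coeff_sB_pow, Nat.choose_eq_zero_of_lt (by omega), PowerSeries.coeff_one]
        simp
    | succ j ihj =>
      intro e
      cases e with
      | zero => exact hzero _ _ _
      | succ k =>
        have hL : sAh ^ (j+1) * sBh ^ 0 = sAh * (sAh ^ j * sBh ^ 0) := by
          rw [pow_succ]; ring
        have hR : ∀ N : ℤ, sA ^ (j+1) * Bz N = sA * (sA ^ j * Bz N) := by
          intro N; rw [pow_succ]; ring
        rw [hL, coeff_succ_sAh, hR, coeff_succ_sA, coeff_succ_Bz]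
        rw [ihj (k+1), ihj k]
        simp only [Nat.cast_add, Nat.cast_one, Nat.cast_zero]
        rw [show (k:ℤ) + 1 - 0 - ((j:ℤ)+1) - 1 + 1 = (k:ℤ) + 1 - 0 - (j:ℤ) - 1 from by ring,
          show (k:ℤ) - 0 - (j:ℤ) - 1 = (k:ℤ) + 1 - 0 - ((j:ℤ)+1) - 1 from by ring]
        ring
  | succ s ihs =>
    intro j e
    cases e with
    | zero => exact hzero _ _ _
    | succ k =>
      have hL : sAh ^ j * sBh ^ (s+1) = sBh * (sAh ^ j * sBh ^ s) := by rw [pow_succ]; ring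
      rw [hL, coeff_succ_sBh, coeff_succ_Bz]
      rw [ihs j (k+1), ihs j k]
      simp only [Nat.cast_add, Nat.cast_one]
      rw [show (k:ℤ) + 1 - ((s:ℤ)+1) - (j:ℤ) - 1 + 1 = (k:ℤ) + 1 - (s:ℤ) - (j:ℤ) - 1 from by ring,
        show (k:ℤ) - (s:ℤ) - (j:ℤ) - 1 = (k:ℤ) + 1 - ((s:ℤ)+1) - (j:ℤ) - 1 from by ring]
      ring

lemma gPoly_ext (j : ℕ) :
    gPoly j = ∑ m ∈ Finset.range (j + 1),
      (C ((catalan (j - m) * (j - m).choose m : ℕ) : ℚ)) * (X - 1) ^ m := by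
  rw [gPoly]
  apply Finset.sum_subset (Finset.range_subset_range.mpr (by omega))
  intro m _ hm
  rw [Finset.mem_range, not_lt] at hm
  rw [Nat.choose_eq_zero_of_lt (by omega : j - m < m)]
  simp

lemma coeff_sG (j : ℕ) : PowerSeries.coeff j sG = gPoly j := by
  rw [sG, coeff_Zser, gPoly_ext]
  rw [← Finset.sum_range_reflect (fun m => (C ((catalan (j - m) * (j - m).choose m : ℕ) : ℚ))
        * (X - 1) ^ m) (j+1)]
  apply Finset.sum_congr rfl
  intro n hn
  rw [Finset.mem_range] at hn
  rw [mul_pow, su, PowerSeries.coeff_X_pow_mul', if_pos (by omega : n ≤ j), coeff_sA_pow]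
  rw [show j + 1 - 1 - n = j - n from by omega, show j - (j - n) = n from by omega]
  rw [catQ, Polynomial.C_eq_natCast, yy]
  push_cast
  ring

noncomputable def Qs (d s : ℕ) : R :=
  ∑ a ∈ Finset.range (d+1), ((s.choose a : R)) * (2*yy)^a * gPoly (d-a)

lemma Qs_coeff (d s : ℕ) : Qs d s = PowerSeries.coeff d (sB ^ s * sG) := by
  rw [PowerSeries.coeff_mul, Finset.Nat.sum_antidiagonal_eq_sum_range_succ_mk, Qs]
  apply Finset.sum_congr rfl
  intro a _
  rw [coeff_sB_pow, coeff_sG]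

lemma Qpoly_eq (d m : ℕ) (h1 : 1 ≤ m) (h2 : m ≤ d) :
    Qpoly d m = Qs d (d - m) + Qs d (d - m + 1) := by
  rw [Qpoly, if_neg (by omega), if_pos h2]
  have hIcc : Finset.Icc (m-1) d ⊆ Finset.Icc 0 d := Finset.Icc_subset_Icc (by omega) le_rfl
  have hvan : ∀ j ∈ Finset.Icc 0 d, j ∉ Finset.Icc (m-1) d →
      (C ((2 ^ (d - j) * ((d - m).choose (d - j) + (d + 1 - m).choose (d - j)) : ℕ) : ℚ)) *
        (X - 1) ^ (d - j) * gPoly j = 0 := by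
    intro j hj hj2
    rw [Finset.mem_Icc] at hj
    rw [Finset.mem_Icc, not_and_or] at hj2
    have hjm : j < m - 1 := by omega
    rw [Nat.choose_eq_zero_of_lt (by omega : d - m < d - j),
      Nat.choose_eq_zero_of_lt (by omega : d + 1 - m < d - j)]
    simp
  rw [Finset.sum_subset hIcc hvan]
  have hIr : Finset.Icc 0 d = Finset.range (d+1) := by
    ext t; simp [Finset.mem_Icc, Finset.mem_range]
  rw [hIr]
  rw [← Finset.sum_range_reflect (fun j =>
    (C ((2 ^ (d - j) * ((d - m).choose (d - j) + (d + 1 - m).choose (d - j)) : ℕ) : ℚ)) *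
        (X - 1) ^ (d - j) * gPoly j) (d+1)]
  rw [Qs, Qs, ← Finset.sum_add_distrib]
  apply Finset.sum_congr rfl
  intro a ha
  rw [Finset.mem_range] at ha
  rw [show d + 1 - 1 - a = d - a from by omega, show d - (d - a) = a from by omega]
  rw [show d + 1 - m = d - m + 1 from by omega, Polynomial.C_eq_natCast, mul_pow, yy]
  push_cast
  ring

lemma reflect_sum (N : ℕ) {α : Type*} (s : Finset α) (f : α → R) :
    Polynomial.reflect N (∑ x ∈ s, f x) = ∑ x ∈ s, Polynomial.reflect N (f x) := by
  induction s using Finset.cons_induction with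
  | empty => simp [Polynomial.reflect_zero]
  | cons a s ha ih => rw [Finset.sum_cons, Finset.sum_cons, Polynomial.reflect_add, ih]

lemma reflect_one_eq (M : ℕ) : Polynomial.reflect M (1 : R) = Polynomial.X ^ M := by
  have := Polynomial.reflect_monomial M 0 (R := ℚ)
  simpa using this

lemma reflect_XsubOne_self : ∀ p : ℕ, Polynomial.reflect p ((X - 1 : R) ^ p) = (1 - X) ^ p := by
  intro p
  induction p with
  | zero => simpa using reflect_one_eq 0
  | succ p ih =>
    have hdeg : ((X - 1 : R) ^ p).natDegree ≤ p := by
      refine le_trans (Polynomial.natDegree_pow_le) ?_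
      have : (X - 1 : R).natDegree = 1 := by
        rw [show (X - 1 : R) = X - Polynomial.C 1 from by rw [map_one], Polynomial.natDegree_X_sub_C]
      rw [this, mul_one]
    have hdeg1 : (X - 1 : R).natDegree ≤ 1 := by
      rw [show (X - 1 : R) = X - Polynomial.C 1 from by rw [map_one], Polynomial.natDegree_X_sub_C]
    have hmul := Polynomial.reflect_mul ((X-1:R)^p) (X-1 : R) hdeg hdeg1
    rw [pow_succ, hmul, ih]
    have hX1 : Polynomial.reflect 1 (X - 1 : R) = 1 - X := by
      rw [sub_eq_add_neg, Polynomial.reflect_add, Polynomial.reflect_neg]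
      have e1 : Polynomial.reflect 1 (X : R) = 1 := by
        have := Polynomial.reflect_monomial 1 1 (R := ℚ)
        simpa using this
      have e2 : Polynomial.reflect 1 (1 : R) = X := by simpa using reflect_one_eq 1
      rw [e1, e2, sub_eq_add_neg]
    rw [hX1, pow_succ]

lemma RF (p N : ℕ) (h : p ≤ N) :
    Polynomial.reflect N ((X - 1 : R) ^ p) = (1 - X) ^ p * Polynomial.X ^ (N - p) := by
  have hdeg : ((X - 1 : R) ^ p).natDegree ≤ p := by
    refine le_trans (Polynomial.natDegree_pow_le) ?_
    rw [show (X - 1 : R) = X - Polynomial.C 1 from by rw [map_one], Polynomial.natDegree_X_sub_C,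
      mul_one]
  have hone : (1 : R).natDegree ≤ N - p := by simp
  have := Polynomial.reflect_mul ((X-1:R)^p) 1 hdeg hone
  rw [mul_one] at this
  rw [show N = p + (N - p) from by omega, this, reflect_XsubOne_self, reflect_one_eq,
    show p + (N - p) - p = N - p from by omega]

noncomputable def sGh : S := Zser (sx * su * sAh) catQ

lemma hWGh : PowerSeries.constantCoeff (sx * su * sAh) = 0 := by
  rw [map_mul, map_mul, su, PowerSeries.constantCoeff_X]
  ring

lemma reflect_Qs (d s : ℕ) :
    Polynomial.reflect (d+1) (Qs d s)
      = Polynomial.X * PowerSeries.coeff d (sBh ^ s * sGh) := by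
  have hQs : Qs d s = ∑ a ∈ Finset.range (d+1), ∑ mm ∈ Finset.range (d - a + 1),
      Polynomial.C (((s.choose a * 2^a * (catalan (d-a-mm) * (d-a-mm).choose mm)) : ℕ) : ℚ)
        * (X-1)^(a+mm) := by
    rw [Qs]
    apply Finset.sum_congr rfl
    intro a ha
    rw [gPoly_ext (d-a), Finset.mul_sum]
    apply Finset.sum_congr rfl
    intro mm hmm
    rw [pow_add, mul_pow, Polynomial.C_eq_natCast, Polynomial.C_eq_natCast, yy]
    push_cast
    ring
  rw [hQs, reflect_sum]
  have hrefl : ∀ a ∈ Finset.range (d+1),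
      Polynomial.reflect (d+1) (∑ mm ∈ Finset.range (d - a + 1),
        Polynomial.C (((s.choose a * 2^a * (catalan (d-a-mm) * (d-a-mm).choose mm)) : ℕ) : ℚ)
          * (X-1)^(a+mm))
      = ∑ mm ∈ Finset.range (d - a + 1),
        Polynomial.C (((s.choose a * 2^a * (catalan (d-a-mm) * (d-a-mm).choose mm)) : ℕ) : ℚ)
          * ((1 - X)^(a+mm) * Polynomial.X ^ (d+1-(a+mm))) := by
    intro a ha
    rw [Finset.mem_range] at ha
    rw [reflect_sum]
    apply Finset.sum_congr rfl
    intro mm hmm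
    rw [Finset.mem_range] at hmm
    rw [Polynomial.reflect_C_mul, RF (a+mm) (d+1) (by omega)]
  rw [Finset.sum_congr rfl hrefl]
  -- now expand the RHS
  have hcoeff : ∀ n ∈ Finset.range (d+1),
      catQ n * PowerSeries.coeff d (sBh ^ s * (sx * su * sAh) ^ n)
        = ∑ a ∈ Finset.range (d - n + 1), catQ n * (Polynomial.X^n *
            ((s.choose a : R) * (-(2*yy))^a * ((n.choose (d-n-a) : R) * (-yy)^(d-n-a)))) := by
    intro n hn
    rw [Finset.mem_range] at hn
    have hsplit : sBh ^ s * (sx * su * sAh) ^ n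
        = PowerSeries.C (Polynomial.X ^ n) * (PowerSeries.X ^ n * (sBh ^ s * sAh ^ n)) := by
      rw [mul_pow, mul_pow, sx, su, ← map_pow]
      ring
    rw [hsplit, PowerSeries.coeff_C_mul, PowerSeries.coeff_X_pow_mul', if_pos (by omega : n ≤ d),
      PowerSeries.coeff_mul, Finset.Nat.sum_antidiagonal_eq_sum_range_succ_mk, Finset.mul_sum,
      Finset.mul_sum]
    apply Finset.sum_congr rfl
    intro a _
    rw [coeff_sBh_pow, coeff_sAh_pow]
  have hRHS : Polynomial.X * PowerSeries.coeff d (sBh ^ s * sGh)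
      = ∑ n ∈ Finset.range (d+1), ∑ a ∈ Finset.range (d - n + 1),
          Polynomial.X * (catQ n * (Polynomial.X^n *
            ((s.choose a : R) * (-(2*yy))^a * ((n.choose (d-n-a) : R) * (-yy)^(d-n-a))))) := by
    rw [sGh, coeff_mul_Zser hWGh, Finset.mul_sum]
    apply Finset.sum_congr rfl
    intro n hn
    rw [hcoeff n hn, Finset.mul_sum]
  rw [hRHS]
  -- both sides are double sums; use a sigma bijection
  rw [Finset.sum_sigma' (Finset.range (d+1)) (fun a => Finset.range (d - a + 1))]
  rw [Finset.sum_sigma' (Finset.range (d+1)) (fun n => Finset.range (d - n + 1))]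
  refine Finset.sum_nbij' (fun p => ⟨d - p.1 - p.2, p.1⟩) (fun p => ⟨p.2, d - p.1 - p.2⟩)
    ?_ ?_ ?_ ?_ ?_
  · intro p hp
    simp only [Finset.mem_sigma, Finset.mem_range] at hp ⊢
    omega
  · intro p hp
    simp only [Finset.mem_sigma, Finset.mem_range] at hp ⊢
    omega
  · intro p hp
    simp only [Finset.mem_sigma, Finset.mem_range] at hp
    have h2 : d - (d - p.fst - p.snd) - (d - p.fst - p.snd) = p.fst ∨ True := Or.inr trivial
    have h3 : d - (d - p.fst - p.snd) - p.fst = p.snd := by omega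
    simp [h3]
  · intro p hp
    simp only [Finset.mem_sigma, Finset.mem_range] at hp
    have h3 : d - p.snd - (d - p.fst - p.snd) = p.fst := by omega
    simp [h3]
  · intro p hp
    simp only [Finset.mem_sigma, Finset.mem_range] at hp
    obtain ⟨a, mm⟩ := p
    simp only at hp ⊢
    -- term equality
    have hmm : d - (d - a - mm) - a = mm := by omega
    rw [hmm]
    rw [show d + 1 - (a + mm) = (d - a - mm) + 1 from by omega]
    rw [Polynomial.C_eq_natCast, catQ, yy]
    push_cast
    rw [show (-(2*(X-1)) : R) = 2*(1-X) from by ring, mul_pow,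
      show (-(X-1) : R) = 1-X from by ring, pow_add, pow_succ]
    ring

lemma stepB (d m : ℕ) (h1 : 1 ≤ m) (h2 : m ≤ d) :
    Polynomial.X * PowerSeries.coeff d ((sBh ^ (d-m) + sBh ^ (d-m+1)) * sGh)
      = PowerSeries.coeff d ((sB ^ (m-1) + sB ^ m) * sG) := by
  have hcomb : sBh ^ (d-m) + sBh ^ (d-m+1) = 2 * sAh * sBh ^ (d-m) := by
    rw [pow_succ, sAh, sBh]; ring
  rw [hcomb, ← PowerSeries.coeff_C_mul, ← sx]
  -- LHS = coeff d (sx * (2*sAh*sBh^s) * sGh)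
  have hL : sx * (2 * sAh * sBh ^ (d-m) * sGh) = (sx * (2 * sAh) * sBh ^ (d-m)) * sGh := by ring
  rw [hL, sGh, coeff_mul_Zser hWGh]
  -- middle identity via KEY
  have hkey2 : 2 * sB ^ (m-1) * sBinv * (sx * sA * sH)
      = (sB ^ (m-1) + sB ^ m) * sG + 2 * sy * sB ^ (m-1) := by
    calc 2 * sB ^ (m-1) * sBinv * (sx * sA * sH)
        = 2 * sB ^ (m-1) * sBinv * (sB * (sA * sG + sy)) := by rw [KEY]
      _ = (sB * sBinv) * (2 * sB ^ (m-1) * (sA * sG + sy)) := by ring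
      _ = 2 * sB ^ (m-1) * (sA * sG + sy) := by rw [B_mul_Binv, one_mul]
      _ = (sB ^ (m-1) + sB ^ (m-1) * sB) * sG + 2 * sy * sB ^ (m-1) := by rw [sA, sB]; ring
      _ = (sB ^ (m-1) + sB ^ m) * sG + 2 * sy * sB ^ (m-1) := by
          rw [← pow_succ, show m-1+1 = m from by omega]
  have htail : PowerSeries.coeff d (2 * sy * sB ^ (m-1)) = 0 := by
    have h2sy : (2 : S) * sy = PowerSeries.C (2 * yy) := by
      rw [map_mul, map_ofNat, sy]
    rw [mul_assoc, ← mul_assoc, h2sy, PowerSeries.coeff_C_mul, coeff_sB_pow,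
      Nat.choose_eq_zero_of_lt (by omega : m - 1 < d)]
    simp
  have hR : PowerSeries.coeff d ((sB ^ (m-1) + sB ^ m) * sG)
      = ∑ n ∈ Finset.range (d+1), catQ n *
          PowerSeries.coeff d ((2 * sB ^ (m-1) * sBinv * sx * sA) * sZ ^ n) := by
    have e0 : (sB ^ (m-1) + sB ^ m) * sG
        = (2 * sB ^ (m-1) * sBinv * sx * sA) * sH - 2 * sy * sB ^ (m-1) := by
      have : (2 * sB ^ (m-1) * sBinv * sx * sA) * sH = 2 * sB ^ (m-1) * sBinv * (sx * sA * sH) := by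
        ring
      rw [this, hkey2]; ring
    rw [e0, map_sub, htail, sub_zero, sH, coeff_mul_Zser hWZ]
  rw [hR]
  apply Finset.sum_congr rfl
  intro n hn
  rw [Finset.mem_range] at hn
  refine congrArg (catQ n * ·) ?_
  -- per-n transport
  have hA : (sx * (2 * sAh) * sBh ^ (d-m)) * (sx * su * sAh) ^ n
      = PowerSeries.C (Polynomial.X ^ (n+1)) *
          (PowerSeries.X ^ n * (2 * (sAh ^ (n+1) * sBh ^ (d-m)))) := by
    rw [mul_pow, mul_pow, show PowerSeries.C (Polynomial.X ^ (n+1)) = sx ^ (n+1) from by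
      rw [sx, map_pow], show (PowerSeries.X : S) ^ n = su ^ n from rfl]
    rw [pow_succ, pow_succ]
    ring
  have hB : (2 * sB ^ (m-1) * sBinv * sx * sA) * sZ ^ n
      = PowerSeries.C (Polynomial.X ^ (n+1)) *
          (PowerSeries.X ^ n * (2 * (sA ^ (n+1) * (sB ^ (m-1) * sBinv ^ (2*n+1))))) := by
    rw [sZ, mul_pow, mul_pow, mul_pow, ← pow_mul,
      show PowerSeries.C (Polynomial.X ^ (n+1)) = sx ^ (n+1) from by rw [sx, map_pow],
      show (PowerSeries.X : S) ^ n = su ^ n from rfl]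
    rw [pow_succ, pow_succ, pow_succ (sBinv) (2*n)]
    ring
  rw [hA, hB, PowerSeries.coeff_C_mul, PowerSeries.coeff_C_mul,
    PowerSeries.coeff_X_pow_mul', PowerSeries.coeff_X_pow_mul', if_pos (by omega : n ≤ d)]
  congr 1
  have h2c : (2 : S) = PowerSeries.C 2 := by rw [map_ofNat]
  rw [h2c, PowerSeries.coeff_C_mul, PowerSeries.coeff_C_mul]
  congr 1
  rw [Bzpow (m-1) (2*n+1)]
  rw [show ((m-1:ℕ):ℤ) - ((2*n+1:ℕ):ℤ) = ((d-n:ℕ):ℤ) - ((d-m:ℕ):ℤ) - ((n+1:ℕ):ℤ) - 1 from by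
    push_cast [Nat.cast_sub (by omega : 1 ≤ m), Nat.cast_sub (by omega : n ≤ d),
      Nat.cast_sub (by omega : m ≤ d)]
    omega]
  have := BID (d-m) (n+1) (d-n)
  rw [this, if_pos (by omega : n ≤ d)]

lemma REFL (d m : ℕ) (h1 : 1 ≤ m) (h2 : m ≤ d) :
    Polynomial.reflect (d+1) (Qpoly d m) = Qpoly d (d+1-m) := by
  rw [Qpoly_eq d m h1 h2, Polynomial.reflect_add, reflect_Qs, reflect_Qs]
  have hL : Polynomial.X * PowerSeries.coeff d (sBh ^ (d-m) * sGh)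
      + Polynomial.X * PowerSeries.coeff d (sBh ^ (d-m+1) * sGh)
      = Polynomial.X * PowerSeries.coeff d ((sBh ^ (d-m) + sBh ^ (d-m+1)) * sGh) := by
    rw [add_mul, map_add]; ring
  rw [hL, stepB d m h1 h2]
  rw [Qpoly_eq d (d+1-m) (by omega) (by omega)]
  rw [show d - (d+1-m) = m - 1 from by omega, show m - 1 + 1 = m from by omega]
  rw [Qs_coeff, Qs_coeff, add_mul, map_add]

lemma QSym (d m k : ℕ) (h1 : 1 ≤ m) (h2 : m ≤ d) (hk : k ≤ d+1) :
    (Qpoly d m).coeff k = (Qpoly d (d+1-m)).coeff (d+1-k) := by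
  rw [← REFL d m h1 h2, Polynomial.coeff_reflect,
    Polynomial.revAt_le (by omega : d+1-k ≤ d+1), show d+1-(d+1-k) = k from by omega]


end St11

/-- Let `d ≥ 1`, `i > 0`, `0 ≤ j ≤ d-i`.  Then for every
`0 ≤ k ≤ d+1`, the coefficient of `x^k` in `C_{d,i,j}(x)` equals the coefficient of
`x^{d+1-k}` in `C_{d,i,d-i-j}(x)`. -/
theorem stmt11 (d i j k : ℕ) (hd : 1 ≤ d) (hi : 0 < i) (hid : i ≤ d)
    (hj : j ≤ d - i) (hk : k ≤ d + 1) :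
    (Cpoly d i j).coeff k = (Cpoly d i (d - i - j)).coeff (d + 1 - k) := by
  have hij : i + j ≤ d := by omega
  rw [Cpoly, Cpoly, Polynomial.finset_sum_coeff, Polynomial.finset_sum_coeff]
  refine Finset.sum_nbij' (fun m => d + 1 - m) (fun m => d + 1 - m) ?_ ?_ ?_ ?_ ?_
  · intro m hm
    rw [Finset.mem_Icc] at hm ⊢
    omega
  · intro m hm
    rw [Finset.mem_Icc] at hm ⊢
    omega
  · intro m hm
    rw [Finset.mem_Icc] at hm
    omega
  · intro m hm
    rw [Finset.mem_Icc] at hm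
    omega
  · intro m hm
    rw [Finset.mem_Icc] at hm
    rw [Polynomial.coeff_C_mul, Polynomial.coeff_C_mul]
    rw [St11.QSym d m k (by omega) (by omega) hk]
    congr 2
    rw [show d + 1 - m - 1 - (d - i - j) = (i-1) - (m - 1 - j) from by omega]
    rw [Nat.choose_symm (by omega : m - 1 - j ≤ i - 1)]
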